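/- Let f ∈ ℂ[x,y] be a homogeneous polynomial of degree d > 1 whose singularity at the origin is not isolated (i.e. f_x and f_y have a common zero in ℂ² other than the origin). Then the following are equivalent: (i) for every g ∈ ℂ[x,y], if f^k·g ∈ D_f for some k ≥ 1, then f·g ∈ D_f (i.e. every torsion element of B(f) is annihilated by t, N(f) = 1); (ii) for every h ∈ J_f, if f^k·h ∈ D_f for some k ≥ 1, then h ∈ D_f (i.e. C(f) = J_f/D_f is torsion free over ℂ[t]). -/

import Mathlib

open MvPolynomial

/-- Membership in `D_f = {f_x·∂g/∂y − f_y·∂g/∂x : g ∈ ℂ[x,y]}`. -/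
def Dmem (f w : MvPolynomial (Fin 2) ℂ) : Prop :=
  ∃ g : MvPolynomial (Fin 2) ℂ,
    w = pderiv 0 f * pderiv 1 g - pderiv 1 f * pderiv 0 g

namespace Statement6Aux

variable (f : MvPolynomial (Fin 2) ℂ)

lemma dmem_zero : Dmem f 0 := ⟨0, by simp⟩

lemma dmem_add {a b : MvPolynomial (Fin 2) ℂ} (ha : Dmem f a) (hb : Dmem f b) :
    Dmem f (a + b) := by
  obtain ⟨g1, rfl⟩ := ha; obtain ⟨g2, rfl⟩ := hb
  exact ⟨g1 + g2, by simp only [map_add]; ring⟩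

lemma dmem_sub {a b : MvPolynomial (Fin 2) ℂ} (ha : Dmem f a) (hb : Dmem f b) :
    Dmem f (a - b) := by
  obtain ⟨g1, rfl⟩ := ha; obtain ⟨g2, rfl⟩ := hb
  exact ⟨g1 - g2, by simp only [map_sub]; ring⟩

lemma dmem_Cmul (c : ℂ) {a : MvPolynomial (Fin 2) ℂ} (ha : Dmem f a) :
    Dmem f (C c * a) := by
  obtain ⟨g, rfl⟩ := ha
  exact ⟨C c * g, by simp only [pderiv_C_mul]; ring⟩

lemma dmem_fmul {a : MvPolynomial (Fin 2) ℂ} (ha : Dmem f a) : Dmem f (f * a) := by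
  obtain ⟨g, rfl⟩ := ha
  exact ⟨f * g, by simp only [pderiv_mul]; ring⟩

lemma dmem_fpow (k : ℕ) {a : MvPolynomial (Fin 2) ℂ} (ha : Dmem f a) :
    Dmem f (f ^ k * a) := by
  induction k with
  | zero => simpa using ha
  | succ n ih =>
    have : f ^ (n + 1) * a = f * (f ^ n * a) := by ring
    rw [this]; exact dmem_fmul f ih

/-- `w ∈ f·R + D_f`. -/
def Smem (w : MvPolynomial (Fin 2) ℂ) : Prop :=
  ∃ u : MvPolynomial (Fin 2) ℂ, Dmem f (w - f * u)

lemma smem_of_dmem {w : MvPolynomial (Fin 2) ℂ} (h : Dmem f w) : Smem f w :=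
  ⟨0, by simpa using h⟩

lemma smem_fmul (u : MvPolynomial (Fin 2) ℂ) : Smem f (f * u) :=
  ⟨u, by simpa using dmem_zero f⟩

lemma smem_add {a b : MvPolynomial (Fin 2) ℂ} (ha : Smem f a) (hb : Smem f b) :
    Smem f (a + b) := by
  obtain ⟨u1, h1⟩ := ha; obtain ⟨u2, h2⟩ := hb
  refine ⟨u1 + u2, ?_⟩
  have e : a + b - f * (u1 + u2) = (a - f * u1) + (b - f * u2) := by ring
  rw [e]; exact dmem_add f h1 h2

lemma smem_sub {a b : MvPolynomial (Fin 2) ℂ} (ha : Smem f a) (hb : Smem f b) :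
    Smem f (a - b) := by
  obtain ⟨u1, h1⟩ := ha; obtain ⟨u2, h2⟩ := hb
  refine ⟨u1 - u2, ?_⟩
  have e : a - b - f * (u1 - u2) = (a - f * u1) - (b - f * u2) := by ring
  rw [e]; exact dmem_sub f h1 h2

lemma smem_Cmul (c : ℂ) {a : MvPolynomial (Fin 2) ℂ} (ha : Smem f a) :
    Smem f (C c * a) := by
  obtain ⟨u, h⟩ := ha
  refine ⟨C c * u, ?_⟩
  have e : C c * a - f * (C c * u) = C c * (a - f * u) := by ring
  rw [e]; exact dmem_Cmul f c h

lemma smem_cancel_nat {n : ℕ} (hn : n ≠ 0) {w : MvPolynomial (Fin 2) ℂ}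
    (h : Smem f ((n : MvPolynomial (Fin 2) ℂ) * w)) : Smem f w := by
  have h2 := smem_Cmul f ((n : ℂ))⁻¹ h
  have e : C ((n : ℂ))⁻¹ * ((n : MvPolynomial (Fin 2) ℂ) * w) = w := by
    rw [← map_natCast (C : ℂ →+* MvPolynomial (Fin 2) ℂ) n, ← mul_assoc, ← C_mul,
      inv_mul_cancel₀ (by exact_mod_cast hn), C_1, one_mul]
  rwa [e] at h2

lemma dmem_cancel_nat {n : ℕ} (hn : n ≠ 0) {w : MvPolynomial (Fin 2) ℂ}
    (h : Dmem f ((n : MvPolynomial (Fin 2) ℂ) * w)) : Dmem f w := by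
  have h2 := dmem_Cmul f ((n : ℂ))⁻¹ h
  have e : C ((n : ℂ))⁻¹ * ((n : MvPolynomial (Fin 2) ℂ) * w) = w := by
    rw [← map_natCast (C : ℂ →+* MvPolynomial (Fin 2) ℂ) n, ← mul_assoc, ← C_mul,
      inv_mul_cancel₀ (by exact_mod_cast hn), C_1, one_mul]
  rwa [e] at h2

/-- Euler's identity for a homogeneous polynomial in two variables. -/
lemma euler {d : ℕ} (hf : f.IsHomogeneous d) :
    X 0 * pderiv 0 f + X 1 * pderiv 1 f = (d : MvPolynomial (Fin 2) ℂ) * f := by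
  have key : ∀ (u : Fin 2 →₀ ℕ) (c : ℂ) (i : Fin 2),
      X i * pderiv i (monomial u c) = monomial u (c * (u i : ℂ)) := by
    intro u c i
    rw [pderiv_monomial]
    by_cases h : u i = 0
    · simp [h]
    · have hle : Finsupp.single i 1 ≤ u := by
        rwa [Finsupp.single_le_iff, Nat.one_le_iff_ne_zero]
      rw [X, monomial_mul, one_mul, add_tsub_cancel_of_le hle]
  conv_lhs => rw [f.as_sum]
  rw [map_sum (pderiv 0), map_sum (pderiv 1), Finset.mul_sum, Finset.mul_sum,
    ← Finset.sum_add_distrib]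
  conv_rhs => rw [f.as_sum, Finset.mul_sum]
  refine Finset.sum_congr rfl fun u hu => ?_
  rw [key, key, ← map_add (monomial u)]
  have hdeg : u 0 + u 1 = d := by
    have h1 := hf (mem_support_iff.mp hu)
    rw [Finsupp.weight_apply, Finsupp.sum_fintype _ _ (by simp)] at h1
    simpa [Fin.sum_univ_two] using h1
  have hc : coeff u f * (u 0 : ℂ) + coeff u f * (u 1 : ℂ) = (d : ℂ) * coeff u f := by
    rw [← hdeg]; push_cast; ring
  rw [hc, ← C_mul_monomial, ← map_natCast (C : ℂ →+* MvPolynomial (Fin 2) ℂ) d]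

lemma mon2 (u : Fin 2 →₀ ℕ) (a : ℂ) :
    monomial u a = C a * (X 0 ^ (u 0) * X 1 ^ (u 1)) := by
  rw [monomial_eq]
  congr 1
  rw [Finsupp.prod_fintype _ _ (by simp), Fin.prod_univ_two]

variable {d : ℕ} (hd : 1 < d) (hf : f.IsHomogeneous d)

include hd hf

lemma smem_fy : ∀ i j : ℕ, Smem f (X 0 ^ i * X 1 ^ j * pderiv 1 f) := by
  intro i j
  have h01 : pderiv 1 (X 0 : MvPolynomial (Fin 2) ℂ) = 0 :=
    pderiv_X_of_ne (by decide)
  have h10 : pderiv 0 (X 1 : MvPolynomial (Fin 2) ℂ) = 0 :=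
    pderiv_X_of_ne (by decide)
  cases j with
  | zero =>
    apply smem_cancel_nat f (n := i + 1) (by omega)
    apply smem_of_dmem
    refine ⟨-(X 0 ^ (i + 1)), ?_⟩
    simp only [map_neg, pderiv_pow, pderiv_X_self, h01, mul_zero, neg_zero, mul_one]
    push_cast
    ring
  | succ q =>
    have he := euler f hf
    apply smem_cancel_nat f (n := i + q + 2) (by omega)
    have hident :
        ((i + q + 2 : ℕ) : MvPolynomial (Fin 2) ℂ) * (X 0 ^ i * X 1 ^ (q + 1) * pderiv 1 f)
          = f * ((((q + 1) * d : ℕ) : MvPolynomial (Fin 2) ℂ) * (X 0 ^ i * X 1 ^ q))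
            - (pderiv 0 f * pderiv 1 (X 0 ^ (i + 1) * X 1 ^ (q + 1))
               - pderiv 1 f * pderiv 0 (X 0 ^ (i + 1) * X 1 ^ (q + 1))) := by
      simp only [pderiv_mul, pderiv_pow, pderiv_X_self, h01, h10, mul_zero, zero_mul,
        mul_one, add_zero, zero_add]
      push_cast
      linear_combination ((q : MvPolynomial (Fin 2) ℂ) + 1) * (X 0 ^ i * X 1 ^ q) * he
    rw [hident]
    exact smem_sub f (smem_fmul f _) (smem_of_dmem f ⟨X 0 ^ (i + 1) * X 1 ^ (q + 1), rfl⟩)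

lemma smem_fx : ∀ i j : ℕ, Smem f (X 0 ^ i * X 1 ^ j * pderiv 0 f) := by
  intro i j
  have h01 : pderiv 1 (X 0 : MvPolynomial (Fin 2) ℂ) = 0 :=
    pderiv_X_of_ne (by decide)
  have h10 : pderiv 0 (X 1 : MvPolynomial (Fin 2) ℂ) = 0 :=
    pderiv_X_of_ne (by decide)
  cases i with
  | zero =>
    apply smem_cancel_nat f (n := j + 1) (by omega)
    apply smem_of_dmem
    refine ⟨X 1 ^ (j + 1), ?_⟩
    simp only [pderiv_pow, pderiv_X_self, h10, mul_zero, zero_mul, mul_one, sub_zero]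
    push_cast
    ring
  | succ p =>
    have he := euler f hf
    have hident :
        X 0 ^ (p + 1) * X 1 ^ j * pderiv 0 f
          = f * ((d : MvPolynomial (Fin 2) ℂ) * (X 0 ^ p * X 1 ^ j))
            - X 0 ^ p * X 1 ^ (j + 1) * pderiv 1 f := by
      push_cast
      linear_combination (X 0 ^ p * X 1 ^ j) * he
    rw [hident]
    exact smem_sub f (smem_fmul f _) (smem_fy f hd hf p (j + 1))

lemma smem_mul_fy (A : MvPolynomial (Fin 2) ℂ) : Smem f (A * pderiv 1 f) := by
  induction A using MvPolynomial.induction_on' with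
  | monomial u a =>
    rw [mon2]
    have e : C a * (X 0 ^ (u 0) * X 1 ^ (u 1)) * pderiv 1 f
        = C a * (X 0 ^ (u 0) * X 1 ^ (u 1) * pderiv 1 f) := by ring
    rw [e]
    exact smem_Cmul f a (smem_fy f hd hf (u 0) (u 1))
  | add p q hp hq =>
    have e : (p + q) * pderiv 1 f = p * pderiv 1 f + q * pderiv 1 f := by ring
    rw [e]
    exact smem_add f hp hq

lemma smem_mul_fx (A : MvPolynomial (Fin 2) ℂ) : Smem f (A * pderiv 0 f) := by
  induction A using MvPolynomial.induction_on' with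
  | monomial u a =>
    rw [mon2]
    have e : C a * (X 0 ^ (u 0) * X 1 ^ (u 1)) * pderiv 0 f
        = C a * (X 0 ^ (u 0) * X 1 ^ (u 1) * pderiv 0 f) := by ring
    rw [e]
    exact smem_Cmul f a (smem_fx f hd hf (u 0) (u 1))
  | add p q hp hq =>
    have e : (p + q) * pderiv 0 f = p * pderiv 0 f + q * pderiv 0 f := by ring
    rw [e]
    exact smem_add f hp hq

lemma smem_of_mem_span {h : MvPolynomial (Fin 2) ℂ}
    (hh : h ∈ Ideal.span ({pderiv 0 f, pderiv 1 f} : Set (MvPolynomial (Fin 2) ℂ))) :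
    Smem f h := by
  rw [Ideal.mem_span_pair] at hh
  obtain ⟨a, b, rfl⟩ := hh
  exact smem_add f (smem_mul_fx f hd hf a) (smem_mul_fy f hd hf b)

lemma f_mem_span : f ∈ Ideal.span ({pderiv 0 f, pderiv 1 f} : Set (MvPolynomial (Fin 2) ℂ)) := by
  have he := euler f hf
  have hd0 : ((d : ℂ)) ≠ 0 := by
    exact_mod_cast (by omega : d ≠ 0)
  rw [Ideal.mem_span_pair]
  refine ⟨C ((d : ℂ))⁻¹ * X 0, C ((d : ℂ))⁻¹ * X 1, ?_⟩
  have : C ((d : ℂ))⁻¹ * (X 0 * pderiv 0 f + X 1 * pderiv 1 f)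
      = C ((d : ℂ))⁻¹ * ((d : MvPolynomial (Fin 2) ℂ) * f) := by rw [he]
  rw [← map_natCast (C : ℂ →+* MvPolynomial (Fin 2) ℂ) d, ← mul_assoc, ← C_mul,
    inv_mul_cancel₀ hd0, C_1, one_mul] at this
  linear_combination this

end Statement6Aux

open Statement6Aux in
/-- For `f ∈ ℂ[x,y]` homogeneous of degree `d > 1` with a non-isolated
singularity at the origin, the torsion order of `B(f)` equals `1` (every torsion element
of `B(f) = ℂ[x,y]/D_f` is annihilated by `t`) iff `C(f) = J_f/D_f` is torsion free
over `ℂ[t]`. -/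
theorem statement6 (f : MvPolynomial (Fin 2) ℂ) (d : ℕ) (hd : 1 < d)
    (hf : f.IsHomogeneous d)
    (hni : ∃ p : Fin 2 → ℂ, p ≠ 0 ∧ eval p (pderiv 0 f) = 0 ∧ eval p (pderiv 1 f) = 0) :
    (∀ (g : MvPolynomial (Fin 2) ℂ) (k : ℕ), 1 ≤ k → Dmem f (f ^ k * g) → Dmem f (f * g)) ↔
      (∀ h ∈ Ideal.span ({pderiv 0 f, pderiv 1 f} : Set (MvPolynomial (Fin 2) ℂ)),
        ∀ k : ℕ, 1 ≤ k → Dmem f (f ^ k * h) → Dmem f h) := by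
  constructor
  · intro H h hmem k hk hD
    obtain ⟨u, hu⟩ := smem_of_mem_span f hd hf hmem
    have h2 : Dmem f (f ^ k * (h - f * u)) := dmem_fpow f k hu
    have h3 : Dmem f (f ^ (k + 1) * u) := by
      have e : f ^ (k + 1) * u = f ^ k * h - f ^ k * (h - f * u) := by ring
      rw [e]; exact dmem_sub f hD h2
    have h4 : Dmem f (f * u) := H u (k + 1) (by omega) h3
    have e2 : h = (h - f * u) + f * u := by ring
    rw [e2]; exact dmem_add f hu h4
  · intro H g k hk hD
    have hmem : f * g ∈ Ideal.span ({pderiv 0 f, pderiv 1 f} :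
        Set (MvPolynomial (Fin 2) ℂ)) :=
      Ideal.mul_mem_right g _ (f_mem_span f hd hf)
    have h1 : Dmem f (f ^ k * (f * g)) := by
      have e : f ^ k * (f * g) = f * (f ^ k * g) := by ring
      rw [e]; exact dmem_fmul f hD
    exact H (f * g) hmem k hk h1
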